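/- arXiv:1810.00312 — 2 statements merged into one kernel-verified Lean document; each statement's English description precedes it below -/
import Mathlib

section
/- Let K = {0, 3, 4, 7, 8, 9} ⊆ ZMod 12 and D its complement. For all u, v : ZMod 12, if the affine map g(x) = v*x + u satisfies g(g(x)) = x for all x, g(x) ≠ x for all x, and the image of K under g equals D, then v = 5 and u = 2. In other words, the dichotomy (K/D) is strong: x ↦ 5x + 2 is the unique affine quasipolarity carrying K onto D. -/
set_option synthInstance.maxSize 1000 in
set_option synthInstance.maxHeartbeats 1000000 in
theorem aux_stmt_3 : ∀ u v : ZMod 12,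
    (∀ x : ZMod 12, v * (v * x + u) + u = x) →
    (∀ x : ZMod 12, v * x + u ≠ x) →
    (∀ x ∈ ({0, 3, 4, 7, 8, 9} : Finset (ZMod 12)),
      v * x + u ∉ ({0, 3, 4, 7, 8, 9} : Finset (ZMod 12))) →
    v = 5 ∧ u = 2 := by decide

/-- The dichotomy `(K/D)` with `K = {0,3,4,7,8,9}` and `D = Kᶜ` is strong:
the only affine involution of `ZMod 12` without fixed points carrying `K`
onto `D` is `x ↦ 5*x + 2`. -/
theorem stmt_3 :
    let K : Set (ZMod 12) := {0, 3, 4, 7, 8, 9}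
    ∀ u v : ZMod 12,
      (∀ x : ZMod 12, v * (v * x + u) + u = x) →
      (∀ x : ZMod 12, v * x + u ≠ x) →
      (fun x : ZMod 12 => v * x + u) '' K = Kᶜ →
      v = 5 ∧ u = 2 := by
  intro K u v h1 h2 h3
  refine aux_stmt_3 u v h1 h2 ?_
  intro x hx hgx
  have hxK : x ∈ K := by
    simp only [Finset.mem_insert, Finset.mem_singleton] at hx
    simpa [K] using hx
  have hmem : v * x + u ∈ Kᶜ := h3 ▸ Set.mem_image_of_mem _ hxK
  exact hmem (by simp only [Finset.mem_insert, Finset.mem_singleton] at hgx; simpa [K] using hgx)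
end

section
/- Let κ = {0, 2, 3, 4, 7, 8} ⊆ ZMod 12 and δ its complement. The affine map h(x) = 7*x + 9 is an involution without fixed points, maps κ onto δ, and differs from the map x ↦ -x + 1 (which also maps κ onto δ). Consequently the dichotomy (κ/δ) is not strong in the category of all affine transformations of ZMod 12: its quasipolarity is not unique there. -/
/-- The affine map `h(x) = 7*x + 9` on `ZMod 12` is an involution without
fixed points mapping `κ = {0,2,3,4,7,8}` onto its complement, and it differs
from `x ↦ -x + 1`, which also maps `κ` onto the complement.  Hence the
dichotomy `(κ/κᶜ)` is not strong in the category of all affine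
transformations of `ZMod 12`. -/
theorem stmt_5 :
    let κ : Set (ZMod 12) := {0, 2, 3, 4, 7, 8}
    let δ : Set (ZMod 12) := κᶜ
    (∀ x : ZMod 12, 7 * (7 * x + 9) + 9 = x) ∧
    (∀ x : ZMod 12, 7 * x + 9 ≠ x) ∧
    (fun x : ZMod 12 => 7 * x + 9) '' κ = δ ∧
    (fun x : ZMod 12 => -x + 1) '' κ = δ ∧
    (fun x : ZMod 12 => 7 * x + 9) ≠ (fun x : ZMod 12 => -x + 1) := by
  refine ⟨by decide, by decide, ?_, ?_, ?_⟩
  · ext y; simp only [Set.mem_image, Set.mem_compl_iff]; constructor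
    · rintro ⟨x, hx, rfl⟩; revert hx; revert x; decide
    · intro hy
      refine ⟨7 * y + 9, ?_, by revert y; decide⟩
      revert hy; revert y; decide
  · ext y; simp only [Set.mem_image, Set.mem_compl_iff]; constructor
    · rintro ⟨x, hx, rfl⟩; revert hx; revert x; decide
    · intro hy
      refine ⟨-y + 1, ?_, by revert y; decide⟩
      revert hy; revert y; decide
  · intro h
    have := congrFun h 0
    revert this; decide
end
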